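/- Let $(a_m)_{m \geq 0}$ be a sequence of nonnegative reals with $\sum_{m=0}^{\infty} a_m = S_2^2 < \infty$, and suppose there is a constant $C > 0$ such that $a_m \leq C (m+1)^{n-1} S_1^2$ for all $m \geq 0$, where $S_1, S_2 > 0$ and $n \geq 2$ is an integer. Then for any $s \in (n/2, n)$, $\sum_{m=0}^{\infty} \frac{a_m}{(m+1)^{2s-n}} \lesssim_{s,C,n} S_1^{2(2s/n - 1)} S_2^{4(1 - s/n)}$, provided $S_2 > S_1$; if $S_2 \leq S_1$ then $\sum_{m=0}^{\infty} \frac{a_m}{(m+1)^{2s-n}} \leq S_2^2$ trivially. -/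

import Mathlib

open Real Finset

lemma sum_rpow_le (α : ℝ) (hα : 0 < α) (N : ℕ) :
    ∑ m ∈ Finset.range N, ((m : ℝ) + 1) ^ (α - 1) ≤ max 1 α⁻¹ * (N : ℝ) ^ α := by
  rcases le_or_gt 1 α with h1 | h1
  · -- each term ≤ N^(α-1)
    calc ∑ m ∈ Finset.range N, ((m : ℝ) + 1) ^ (α - 1)
        ≤ ∑ _m ∈ Finset.range N, (N : ℝ) ^ (α - 1) := by
          apply Finset.sum_le_sum
          intro m hm
          apply Real.rpow_le_rpow (by positivity)
          · have := Finset.mem_range.mp hm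
            have : (m:ℝ) + 1 ≤ N := by exact_mod_cast Nat.succ_le_of_lt this
            linarith
          · linarith
      _ = (N : ℝ) * (N : ℝ) ^ (α - 1) := by
          rw [Finset.sum_const, Finset.card_range]; ring
      _ ≤ max 1 α⁻¹ * (N : ℝ) ^ α := by
          rcases Nat.eq_zero_or_pos N with h | h
          · subst h; simp; positivity
          · have hN : (0:ℝ) < N := by exact_mod_cast h
            rw [← Real.rpow_one_add' (le_of_lt hN) (by linarith)]
            ring_nf
            nlinarith [le_max_left (1:ℝ) α⁻¹, Real.rpow_nonneg hN.le α]
  · -- induction with Bernoulli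
    have hc : max 1 α⁻¹ = α⁻¹ := max_eq_right (by
      rw [le_inv_comm₀] <;> simp_all <;> linarith)
    rw [hc]
    induction N with
    | zero => simp [Real.zero_rpow hα.ne']
    | succ N ih =>
      rw [Finset.sum_range_succ]
      have hN1 : (0:ℝ) < (N:ℝ) + 1 := by positivity
      have key : (N:ℝ) ^ α ≤ ((N:ℝ)+1) ^ α - α * ((N:ℝ)+1) ^ (α - 1) := by
        have hs : (-1:ℝ) ≤ -(1/((N:ℝ)+1)) := by
          rw [neg_le_neg_iff]
          rw [div_le_one hN1]; linarith
        have hb := rpow_one_add_le_one_add_mul_self hs hα.le h1.le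
        have hmul : (((N:ℝ)+1) * (1 + -(1/((N:ℝ)+1)))) ^ α
            = ((N:ℝ)+1) ^ α * (1 + -(1/((N:ℝ)+1))) ^ α := by
          apply Real.mul_rpow hN1.le
          have : 1/((N:ℝ)+1) ≤ 1 := by rw [div_le_one hN1]; linarith
          linarith
        have hN : ((N:ℝ)+1) * (1 + -(1/((N:ℝ)+1))) = (N:ℝ) := by
          field_simp; ring
        calc (N:ℝ) ^ α = ((N:ℝ)+1) ^ α * (1 + -(1/((N:ℝ)+1))) ^ α := by
              rw [← hmul, hN]
          _ ≤ ((N:ℝ)+1) ^ α * (1 + α * -(1/((N:ℝ)+1))) := by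
              apply mul_le_mul_of_nonneg_left hb (Real.rpow_nonneg hN1.le α)
          _ = ((N:ℝ)+1) ^ α - α * (((N:ℝ)+1) ^ α / ((N:ℝ)+1)) := by ring
          _ = ((N:ℝ)+1) ^ α - α * ((N:ℝ)+1) ^ (α - 1) := by
              rw [Real.rpow_sub hN1, Real.rpow_one]
      push_cast
      have : ((N:ℝ)+1) ^ (α - 1) ≤ α⁻¹ * (((N:ℝ)+1) ^ α - (N:ℝ) ^ α) := by
        rw [le_inv_mul_iff₀ hα]
        linarith
      linarith

set_option maxHeartbeats 1000000 in
/-- Spectral-sum bound: if `∑ a_m = S₂²` and `a_m ≤ C (m+1)^{n-1} S₁²`, then for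
`s ∈ (n/2, n)` the weighted sum `∑ a_m/(m+1)^{2s-n}` is `≲_{s,C,n} S₁^{2(2s/n-1)} S₂^{4(1-s/n)}`
when `S₂ > S₁`, and trivially `≤ S₂²` when `S₂ ≤ S₁`. -/
theorem stmt2 (n : ℕ) (hn : 2 ≤ n) (s : ℝ) (hs1 : (n : ℝ) / 2 < s) (hs2 : s < n)
    (C : ℝ) (hC : 0 < C) :
    ∃ K : ℝ, 0 < K ∧ ∀ (a : ℕ → ℝ) (S₁ S₂ : ℝ),
      (∀ m, 0 ≤ a m) → Summable a → (∑' m, a m) = S₂ ^ 2 →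
      (∀ m, a m ≤ C * ((m : ℝ) + 1) ^ (n - 1) * S₁ ^ 2) →
      0 < S₁ → 0 < S₂ →
      ((S₁ < S₂ →
          (∑' m, a m / ((m : ℝ) + 1) ^ (2 * s - (n : ℝ))) ≤
            K * S₁ ^ (2 * (2 * s / n - 1)) * S₂ ^ (4 * (1 - s / n))) ∧
        (S₂ ≤ S₁ →
          (∑' m, a m / ((m : ℝ) + 1) ^ (2 * s - (n : ℝ))) ≤ S₂ ^ 2)) := by
  have hn0 : (0:ℝ) < n := by positivity
  set α : ℝ := 2 * ((n:ℝ) - s) with hαdef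
  have hα : 0 < α := by simp only [hαdef]; linarith
  have hσ : 0 < 2 * s - (n:ℝ) := by linarith
  refine ⟨C * max 1 α⁻¹ * (2:ℝ) ^ α + 1, by positivity, ?_⟩
  intro a S₁ S₂ hnn hsum htot hbd hS₁ hS₂
  -- basic facts about the weighted terms
  have hfle : ∀ m : ℕ, a m / ((m : ℝ) + 1) ^ (2 * s - (n : ℝ)) ≤ a m := by
    intro m
    apply div_le_self (hnn m)
    apply Real.one_le_rpow (by push_cast; linarith) hσ.le
  have hfnn : ∀ m : ℕ, 0 ≤ a m / ((m : ℝ) + 1) ^ (2 * s - (n : ℝ)) := by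
    intro m
    have := hnn m
    positivity
  have hfs : Summable (fun m => a m / ((m : ℝ) + 1) ^ (2 * s - (n : ℝ))) :=
    Summable.of_nonneg_of_le hfnn hfle hsum
  have htriv : (∑' m, a m / ((m : ℝ) + 1) ^ (2 * s - (n : ℝ))) ≤ S₂ ^ 2 := by
    rw [← htot]
    exact Summable.tsum_le_tsum hfle hfs hsum
  refine ⟨?_, fun _ => htriv⟩
  intro hlt
  -- setup the cut point
  have hQ0 : (0:ℝ) < S₂ / S₁ := by positivity
  have hQ1 : 1 < S₂ / S₁ := (one_lt_div hS₁).mpr hlt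
  set R : ℝ := (S₂ / S₁) ^ ((2:ℝ) / n) with hRdef
  have hR0 : 0 < R := Real.rpow_pos_of_pos hQ0 _
  have hR1 : 1 < R := (Real.one_lt_rpow_iff_of_pos hQ0).mpr (Or.inl ⟨hQ1, by positivity⟩)
  set M : ℕ := ⌊R⌋₊ with hMdef
  have hM1 : 1 ≤ M := Nat.le_floor (by exact_mod_cast hR1.le)
  have hMR : (M:ℝ) ≤ R := Nat.floor_le hR0.le
  have hRM : R < (M:ℝ) + 1 := Nat.lt_floor_add_one R
  have hM2R : ((M:ℝ) + 1) ≤ 2 * R := by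
    have : (1:ℝ) ≤ (M:ℝ) := by exact_mod_cast hM1
    linarith
  -- pointwise bound with real exponents
  have hbd' : ∀ m : ℕ, a m ≤ C * ((m : ℝ) + 1) ^ ((n:ℝ) - 1) * S₁ ^ 2 := by
    intro m
    have h1 : ((m : ℝ) + 1) ^ ((n:ℝ) - 1) = ((m : ℝ) + 1) ^ (n - 1 : ℕ) := by
      rw [← Real.rpow_natCast ((m:ℝ)+1) (n-1)]
      congr 1
      push_cast [Nat.cast_sub (by omega : 1 ≤ n)]
      ring
    rw [h1]; exact hbd m
  -- small-m term bound
  have hterm : ∀ m : ℕ, a m / ((m : ℝ) + 1) ^ (2 * s - (n : ℝ)) ≤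
      C * S₁ ^ 2 * ((m : ℝ) + 1) ^ (α - 1) := by
    intro m
    have hm : (0:ℝ) < (m:ℝ) + 1 := by positivity
    have h2 : a m / ((m : ℝ) + 1) ^ (2 * s - (n : ℝ)) ≤
        (C * ((m : ℝ) + 1) ^ ((n:ℝ) - 1) * S₁ ^ 2) / ((m : ℝ) + 1) ^ (2 * s - (n : ℝ)) := by
      gcongr
      exact hbd' m
    refine h2.trans (le_of_eq ?_)
    rw [show C * ((m : ℝ) + 1) ^ ((n:ℝ) - 1) * S₁ ^ 2 = C * S₁ ^ 2 * ((m : ℝ) + 1) ^ ((n:ℝ) - 1) by ring,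
      mul_div_assoc, ← Real.rpow_sub hm]
    congr 1
    rw [hαdef]; ring
  -- small part
  have hsmall : ∑ m ∈ Finset.range (M+1), a m / ((m : ℝ) + 1) ^ (2 * s - (n : ℝ)) ≤
      C * S₁ ^ 2 * (max 1 α⁻¹ * (((M:ℕ):ℝ) + 1) ^ α) := by
    calc ∑ m ∈ Finset.range (M+1), a m / ((m : ℝ) + 1) ^ (2 * s - (n : ℝ))
        ≤ ∑ m ∈ Finset.range (M+1), C * S₁ ^ 2 * ((m : ℝ) + 1) ^ (α - 1) :=
          Finset.sum_le_sum fun m _ => hterm m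
      _ = C * S₁ ^ 2 * ∑ m ∈ Finset.range (M+1), ((m : ℝ) + 1) ^ (α - 1) := by
          rw [Finset.mul_sum]
      _ ≤ C * S₁ ^ 2 * (max 1 α⁻¹ * ((M+1 : ℕ) : ℝ) ^ α) := by
          have := sum_rpow_le α hα (M+1)
          have hCS : (0:ℝ) ≤ C * S₁ ^ 2 := by positivity
          exact mul_le_mul_of_nonneg_left this hCS
      _ = C * S₁ ^ 2 * (max 1 α⁻¹ * (((M:ℕ):ℝ) + 1) ^ α) := by push_cast; ring_nf
  -- key identity
  have hRn : R ^ ((n:ℝ)) = S₂ ^ 2 / S₁ ^ 2 := by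
    rw [hRdef, ← Real.rpow_mul hQ0.le]
    rw [show (2:ℝ) / n * n = ((2:ℕ):ℝ) by push_cast; field_simp]
    rw [Real.rpow_natCast, div_pow]
  have hkey : S₁ ^ 2 * R ^ α = S₂ ^ 2 * R ^ (-(2 * s - (n:ℝ))) := by
    have h1 : R ^ α = R ^ ((n:ℝ)) * R ^ (-(2 * s - (n:ℝ))) := by
      rw [← Real.rpow_add hR0]
      congr 1
      rw [hαdef]; ring
    rw [h1, hRn]
    field_simp
  have hMα : (((M:ℕ):ℝ) + 1) ^ α ≤ 2 ^ α * R ^ α := by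
    rw [← Real.mul_rpow (by norm_num) hR0.le]
    exact Real.rpow_le_rpow (by positivity) hM2R hα.le
  have hsmall2 : ∑ m ∈ Finset.range (M+1), a m / ((m : ℝ) + 1) ^ (2 * s - (n : ℝ)) ≤
      C * max 1 α⁻¹ * (2:ℝ) ^ α * (S₂ ^ 2 * R ^ (-(2 * s - (n:ℝ)))) := by
    refine hsmall.trans ?_
    rw [← hkey]
    calc C * S₁ ^ 2 * (max 1 α⁻¹ * (((M:ℕ):ℝ) + 1) ^ α)
        ≤ C * S₁ ^ 2 * (max 1 α⁻¹ * (2 ^ α * R ^ α)) := by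
          have hCS : (0:ℝ) ≤ C * S₁ ^ 2 := by positivity
          have hmx : (0:ℝ) ≤ max 1 α⁻¹ := le_max_of_le_left zero_le_one
          exact mul_le_mul_of_nonneg_left (mul_le_mul_of_nonneg_left hMα hmx) hCS
      _ = C * max 1 α⁻¹ * (2:ℝ) ^ α * (S₁ ^ 2 * R ^ α) := by ring
  -- tail part
  have htail : (∑' k, a (k + (M+1)) / (((k + (M+1) : ℕ) : ℝ) + 1) ^ (2 * s - (n : ℝ))) ≤
      S₂ ^ 2 * R ^ (-(2 * s - (n:ℝ))) := by
    have hterm2 : ∀ k : ℕ, a (k + (M+1)) / (((k + (M+1) : ℕ) : ℝ) + 1) ^ (2 * s - (n : ℝ)) ≤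
        a (k + (M+1)) * R ^ (-(2 * s - (n:ℝ))) := by
      intro k
      have hx : R ≤ ((k + (M+1) : ℕ) : ℝ) + 1 := by
        push_cast
        have hk : (0:ℝ) ≤ (k:ℝ) := Nat.cast_nonneg k
        linarith
      have hRσ : R ^ (2 * s - (n:ℝ)) ≤ (((k + (M+1) : ℕ) : ℝ) + 1) ^ (2 * s - (n:ℝ)) :=
        Real.rpow_le_rpow hR0.le hx hσ.le
      rw [Real.rpow_neg hR0.le, div_eq_mul_inv]
      have h0 : (0:ℝ) < R ^ (2 * s - (n:ℝ)) := Real.rpow_pos_of_pos hR0 _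
      exact mul_le_mul_of_nonneg_left (by
        apply inv_anti₀ h0 hRσ) (hnn _)
    have hsum2 : Summable (fun k => a (k + (M+1)) * R ^ (-(2 * s - (n:ℝ)))) :=
      ((summable_nat_add_iff (M+1)).mpr hsum).mul_right _
    have hsum1 : Summable (fun k => a (k + (M+1)) / (((k + (M+1) : ℕ) : ℝ) + 1) ^ (2 * s - (n : ℝ))) :=
      (summable_nat_add_iff (M+1)).mpr hfs
    refine (Summable.tsum_le_tsum hterm2 hsum1 hsum2).trans ?_
    rw [tsum_mul_right]
    have htail_le : (∑' k, a (k + (M+1))) ≤ S₂ ^ 2 := by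
      have h := Summable.sum_add_tsum_nat_add (M+1) hsum
      rw [htot] at h
      have hfin : 0 ≤ ∑ i ∈ Finset.range (M+1), a i := Finset.sum_nonneg fun i _ => hnn i
      linarith
    have hr : (0:ℝ) ≤ R ^ (-(2 * s - (n:ℝ))) := (Real.rpow_pos_of_pos hR0 _).le
    exact mul_le_mul_of_nonneg_right htail_le hr
  -- combine
  have hsplit := Summable.sum_add_tsum_nat_add (M+1) hfs
  have htotal : (∑' m, a m / ((m : ℝ) + 1) ^ (2 * s - (n : ℝ))) ≤
      (C * max 1 α⁻¹ * (2:ℝ) ^ α + 1) * (S₂ ^ 2 * R ^ (-(2 * s - (n:ℝ)))) := by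
    rw [← hsplit]
    calc (∑ m ∈ Finset.range (M+1), a m / ((m : ℝ) + 1) ^ (2 * s - (n : ℝ))) +
          (∑' k, a (k + (M+1)) / (((k + (M+1) : ℕ) : ℝ) + 1) ^ (2 * s - (n : ℝ)))
        ≤ C * max 1 α⁻¹ * (2:ℝ) ^ α * (S₂ ^ 2 * R ^ (-(2 * s - (n:ℝ)))) +
          S₂ ^ 2 * R ^ (-(2 * s - (n:ℝ))) := add_le_add hsmall2 htail
      _ = (C * max 1 α⁻¹ * (2:ℝ) ^ α + 1) * (S₂ ^ 2 * R ^ (-(2 * s - (n:ℝ)))) := by ring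
  -- final rpow algebra
  have hfinal : S₂ ^ 2 * R ^ (-(2 * s - (n:ℝ))) =
      S₁ ^ (2 * (2 * s / n - 1)) * S₂ ^ (4 * (1 - s / n)) := by
    have hnne : (n:ℝ) ≠ 0 := ne_of_gt hn0
    have e1 : R ^ (-(2 * s - (n:ℝ))) = (S₂/S₁) ^ ((2:ℝ)/n * -(2 * s - (n:ℝ))) := by
      rw [hRdef, ← Real.rpow_mul hQ0.le]
    have e2 : (2:ℝ)/n * -(2 * s - (n:ℝ)) = -(2 * (2 * s / n - 1)) := by
      first
      | (field_simp; ring)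
      | field_simp
    have e3 : (S₂/S₁) ^ (-(2 * (2 * s / n - 1))) =
        S₂ ^ (-(2 * (2 * s / n - 1))) * S₁ ^ (2 * (2 * s / n - 1)) := by
      rw [Real.div_rpow hS₂.le hS₁.le, div_eq_mul_inv]
      congr 1
      rw [Real.rpow_neg hS₁.le, inv_inv]
    have e4 : S₂ ^ (2:ℕ) * S₂ ^ (-(2 * (2 * s / n - 1))) = S₂ ^ (4 * (1 - s / n)) := by
      rw [← Real.rpow_natCast S₂ 2, ← Real.rpow_add hS₂]
      congr 1
      push_cast
      first
      | (field_simp; ring)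
      | field_simp
    calc S₂ ^ 2 * R ^ (-(2 * s - (n:ℝ)))
        = S₂ ^ 2 * (S₂ ^ (-(2 * (2 * s / n - 1))) * S₁ ^ (2 * (2 * s / n - 1))) := by
          rw [e1, e2, e3]
      _ = S₁ ^ (2 * (2 * s / n - 1)) * (S₂ ^ (2:ℕ) * S₂ ^ (-(2 * (2 * s / n - 1)))) := by
          ring
      _ = S₁ ^ (2 * (2 * s / n - 1)) * S₂ ^ (4 * (1 - s / n)) := by rw [e4]
  refine htotal.trans (le_of_eq ?_)
  rw [hfinal]
  ring
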